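/- As Δ = 1−α → 0+, one has 2Γ²(1+α)/Γ(1+2α) − 1 = Δ + Δ²(2 − π²/6) + O(Δ³). -/

import Mathlib

open Real Filter Asymptotics Set


noncomputable def uu : ℝ → ℝ := fun d => Real.Gamma (1 + 2*d) / (Real.Gamma (1 + d))^2

lemma gamma_ne_zero_small {s : ℝ} (h0 : s ≠ 0) (h1 : |s| < 1) : Real.Gamma s ≠ 0 := by
  apply Real.Gamma_ne_zero
  intro m
  rcases Nat.eq_zero_or_pos m with hm | hm
  · simpa [hm] using h0
  · intro he
    rw [abs_lt] at h1
    have : (1:ℝ) ≤ m := by exact_mod_cast hm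
    linarith [h1.1, he ▸ (by linarith : -(m:ℝ) ≤ -1)]

lemma uu_zero : uu 0 = 1 := by simp [uu, Real.Gamma_one]

lemma uu_refl {d : ℝ} (h : |d| < 1/2) :
    uu d * uu (-d) * (π * d * Real.cos (π * d)) = Real.sin (π * d) := by
  rcases eq_or_ne d 0 with rfl | hd
  · simp
  · have hπ := Real.pi_pos
    have habs := abs_lt.mp h
    have hsin : Real.sin (π * d) ≠ 0 := by
      rw [ne_eq, Real.sin_eq_zero_iff_of_lt_of_lt (by nlinarith) (by nlinarith)]
      intro hc
      exact hd ((mul_eq_zero.mp hc).resolve_left hπ.ne')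
    have hA : Real.Gamma d ≠ 0 := gamma_ne_zero_small hd (by rw [abs_lt] at *; constructor <;> linarith)
    have hB : Real.Gamma (2*d) ≠ 0 := by
      apply gamma_ne_zero_small (by simpa using hd)
      rw [abs_mul, abs_two]; linarith
    have hA' : Real.Gamma (1 - d) ≠ 0 := (Real.Gamma_pos_of_pos (by linarith)).ne'
    have hB' : Real.Gamma (1 - 2*d) ≠ 0 := (Real.Gamma_pos_of_pos (by linarith)).ne'
    have s1 : Real.Gamma d * Real.Gamma (1 - d) * Real.sin (π * d) = π := by
      rw [Real.Gamma_mul_Gamma_one_sub d]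
      field_simp
    have s2 : Real.Gamma (2*d) * Real.Gamma (1 - 2*d) *
        (2 * Real.sin (π * d) * Real.cos (π * d)) = π := by
      have := Real.Gamma_mul_Gamma_one_sub (2*d)
      rw [show π * (2*d) = 2 * (π * d) by ring, Real.sin_two_mul] at this
      rw [this]
      have h2 : 2 * Real.sin (π*d) * Real.cos (π*d) ≠ 0 := by
        rw [← Real.sin_two_mul, ne_eq,
          Real.sin_eq_zero_iff_of_lt_of_lt (by nlinarith) (by nlinarith)]
        intro hc
        exact hd (by nlinarith)
      field_simp
      exact div_self (right_ne_zero_of_mul h2)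
    have hr1 : Real.Gamma (1 + d) = d * Real.Gamma d := by
      rw [add_comm]; exact Real.Gamma_add_one hd
    have hr2 : Real.Gamma (1 + 2*d) = 2*d * Real.Gamma (2*d) := by
      rw [add_comm]; exact Real.Gamma_add_one (by simpa using hd)
    unfold uu
    rw [hr1, hr2, show (1:ℝ) + -d = 1 - d by ring, show (1:ℝ) + 2*(-d) = 1 - 2*d by ring]
    apply mul_right_cancel₀ hsin
    field_simp
    rw [mul_comm d π]
    linear_combination π * s2 - (Real.Gamma d * Real.Gamma (1-d) * Real.sin (π*d) + π) * s1

lemma gammaAnalytic {x : ℝ} (hx : 0 < x) : AnalyticAt ℝ Real.Gamma x := by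
  have hC : AnalyticAt ℂ Complex.Gamma (x : ℂ) := by
    have hopen : IsOpen {z : ℂ | 0 < z.re} := isOpen_lt continuous_const Complex.continuous_re
    have hdiff : DifferentiableOn ℂ Complex.Gamma {z : ℂ | 0 < z.re} := by
      intro z hz
      refine (Complex.differentiableAt_Gamma z ?_).differentiableWithinAt
      intro m hm
      rw [hm] at hz
      simp only [Set.mem_setOf_eq, Complex.neg_re, Complex.natCast_re] at hz
      have : (0:ℝ) ≤ m := Nat.cast_nonneg m
      linarith
    exact hdiff.analyticAt (hopen.mem_nhds (by simpa using hx))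
  have heq : Real.Gamma = fun t : ℝ => (Complex.Gamma (t:ℂ)).re := by
    funext t; rw [Complex.Gamma_ofReal, Complex.ofReal_re]
  rw [heq]
  exact (Complex.reCLM.analyticAt _).comp ((hC.restrictScalars).comp (Complex.ofRealCLM.analyticAt x))

lemma aux_analytic1 : AnalyticAt ℝ (fun d : ℝ => Real.Gamma (1 + 2*d)) 0 := by
  have haff : AnalyticAt ℝ (fun d : ℝ => 1 + 2*d) 0 :=
    analyticAt_const.add (analyticAt_const.mul analyticAt_id)
  exact AnalyticAt.comp (g := Real.Gamma)
    (by show AnalyticAt ℝ Real.Gamma (1 + 2*(0:ℝ)); norm_num; exact gammaAnalytic one_pos) haff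

lemma aux_analytic2 : AnalyticAt ℝ (fun d : ℝ => Real.Gamma (1 + d)) 0 := by
  have haff : AnalyticAt ℝ (fun d : ℝ => 1 + d) 0 := analyticAt_const.add analyticAt_id
  exact AnalyticAt.comp (g := Real.Gamma)
    (by show AnalyticAt ℝ Real.Gamma (1 + (0:ℝ)); norm_num; exact gammaAnalytic one_pos) haff

lemma uu_analytic : AnalyticAt ℝ uu 0 := by
  apply aux_analytic1.div (aux_analytic2.pow 2)
  simp [Real.Gamma_one]

lemma deriv_uu_zero : deriv uu 0 = 0 := by
  have h1 : ∀ m : ℕ, (1:ℝ) ≠ -m := by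
    intro m; have : (0:ℝ) ≤ m := Nat.cast_nonneg m; intro hc; linarith
  set c := deriv Real.Gamma 1 with hc
  have hΓ : HasDerivAt Real.Gamma c 1 := (Real.differentiableAt_Gamma h1).hasDerivAt
  have haff1 : HasDerivAt (fun d : ℝ => 1 + 2*d) 2 0 := by
    simpa using ((hasDerivAt_id (0:ℝ)).const_mul 2).const_add 1
  have haff2 : HasDerivAt (fun d : ℝ => 1 + d) 1 0 := by
    simpa using (hasDerivAt_id (0:ℝ)).const_add 1
  have hΓ1 : HasDerivAt Real.Gamma c (1 + 2*(0:ℝ)) := by norm_num; exact hΓ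
  have hΓ2 : HasDerivAt Real.Gamma c (1 + (0:ℝ)) := by norm_num; exact hΓ
  have hN : HasDerivAt (fun d : ℝ => Real.Gamma (1 + 2*d)) (c * 2) 0 := hΓ1.comp (h := fun d : ℝ => 1 + 2*d) 0 haff1
  have hD0 : HasDerivAt (fun d : ℝ => Real.Gamma (1 + d)) (c * 1) 0 := hΓ2.comp (h := fun d : ℝ => 1 + d) 0 haff2
  have hD : HasDerivAt (fun d : ℝ => (Real.Gamma (1 + d))^2)
      (2 * (Real.Gamma (1 + (0:ℝ)))^1 * (c*1)) 0 := hD0.pow 2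
  have hden : ((Real.Gamma (1 + (0:ℝ)))^2) ≠ 0 := by norm_num [Real.Gamma_one]
  have hu : HasDerivAt uu ((c * 2 * (Real.Gamma (1 + (0:ℝ)))^2 -
      Real.Gamma (1 + 2*(0:ℝ)) * (2 * (Real.Gamma (1 + (0:ℝ)))^1 * (c*1))) /
      ((Real.Gamma (1 + (0:ℝ)))^2)^2) 0 := hN.div hD hden
  rw [hu.deriv]
  norm_num [Real.Gamma_one]
  ring

lemma pow_bigO {m n : ℕ} (h : n ≤ m) : (fun d : ℝ => d^m) =O[nhds 0] (fun d : ℝ => d^n) := by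
  rcases eq_or_lt_of_le h with rfl | h
  · exact isBigO_refl _ _
  · exact (isLittleO_pow_pow h).isBigO

lemma const_cube_zero {c : ℝ} (h : (fun d : ℝ => c * d^3) =O[nhds 0] (fun d : ℝ => d^4)) :
    c = 0 := by
  have h2 : (fun d : ℝ => c * d^3) =o[nhds 0] (fun d : ℝ => d^3) :=
    h.trans_isLittleO (isLittleO_pow_pow (by norm_num))
  have h3 := (h2.mono nhdsWithin_le_nhds : _ =o[nhdsWithin 0 {(0:ℝ)}ᶜ] _)
  by_contra hc
  have hεpos : 0 < |c|/2 := by positivity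
  have h4 := h3.def hεpos
  have h5 := h4.and self_mem_nhdsWithin
  obtain ⟨d, hd1, hd2⟩ := h5.exists
  have hd3 : d ≠ 0 := hd2
  have : |c| * |d^3| ≤ |c|/2 * |d^3| := by
    calc |c| * |d^3| = ‖c * d^3‖ := by rw [norm_mul]; simp [Real.norm_eq_abs]
    _ ≤ |c|/2 * ‖d^3‖ := hd1
    _ = |c|/2 * |d^3| := by simp [Real.norm_eq_abs]
  have hpos : 0 < |d^3| := by positivity
  nlinarith

lemma eventually_small : ∀ᶠ d : ℝ in nhds 0, |d| < 1/4 := by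
  have := Metric.ball_mem_nhds (0:ℝ) (by norm_num : (0:ℝ) < 1/4)
  filter_upwards [this] with d hd
  simpa [Real.dist_eq] using hd

lemma norm_pow_bigO (n : ℕ) : (fun y : ℝ => ‖y‖^n) =O[nhds 0] fun y => y^n := by
  apply IsBigO.of_bound 1
  filter_upwards with y
  simp [Real.norm_eq_abs, abs_pow]

lemma hS_bound : (fun d : ℝ => Real.sin (π*d) - (π*d - π^3*d^3/6)) =O[nhds 0]
    (fun d => d^4) := by
  apply IsBigO.of_bound (π^4 * (5/96))
  filter_upwards [eventually_small] with d hd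
  have h1 : |π*d| ≤ 1 := by
    rw [abs_mul, abs_of_pos Real.pi_pos]
    nlinarith [Real.pi_le_four, abs_nonneg d]
  have hb := Real.sin_bound h1
  have e : π*d - π^3*d^3/6 = π*d - (π*d)^3/6 := by ring
  rw [Real.norm_eq_abs, Real.norm_eq_abs, e]
  calc |Real.sin (π*d) - (π*d - (π*d)^3/6)| ≤ |π*d|^4 * (5/96) := hb.trans (by
        have h4 := pow_nonneg (abs_nonneg (π*d)) 4
        have : |π*d|^5 = |π*d|^4*|π*d| := by ring
        rw [this]; nlinarith)
  _ = π^4 * (5/96) * |d^4| := by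
      simp only [abs_mul, abs_pow, abs_of_pos Real.pi_pos]
      ring

lemma hK_bound : (fun d : ℝ => π*d*Real.cos (π*d) - (π*d - π^3*d^3/2)) =O[nhds 0]
    (fun d => d^4) := by
  apply IsBigO.of_bound (π^4 * (5/96))
  filter_upwards [eventually_small] with d hd
  have h1 : |π*d| ≤ 1 := by
    rw [abs_mul, abs_of_pos Real.pi_pos]
    nlinarith [Real.pi_le_four, abs_nonneg d]
  have hb := Real.cos_bound h1
  have e : π*d*Real.cos (π*d) - (π*d - π^3*d^3/2)
      = π*d * (Real.cos (π*d) - (1 - (π*d)^2/2)) := by ring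
  rw [Real.norm_eq_abs, Real.norm_eq_abs, e, abs_mul]
  calc |π*d| * |Real.cos (π*d) - (1 - (π*d)^2/2)| ≤ 1 * (|π*d|^4 * (5/96)) := by
        apply mul_le_mul h1 hb (abs_nonneg _) zero_le_one
  _ = |π*d|^4 * (5/96) := one_mul _
  _ = π^4 * (5/96) * |d^4| := by
      simp only [abs_mul, abs_pow, abs_of_pos Real.pi_pos]
      ring

lemma hk1_bound : (fun d : ℝ => π*d*Real.cos (π*d)) =O[nhds 0] (fun d : ℝ => d) := by
  apply IsBigO.of_bound π
  filter_upwards with d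
  rw [Real.norm_eq_abs, Real.norm_eq_abs, abs_mul, abs_mul, abs_of_pos Real.pi_pos]
  exact mul_le_of_le_one_right (mul_nonneg Real.pi_pos.le (abs_nonneg d))
    (Real.abs_cos_le_one (π*d))

lemma b_value {b : ℝ}
    (hE : (fun d : ℝ => uu d - (1 + b * d^2)) =O[nhds 0] (fun d => d^3)) :
    b = π^2/6 := by
  have hEneg : (fun d : ℝ => uu (-d) - (1 + b * d^2)) =O[nhds 0] (fun d => d^3) := by
    have hneg : Filter.Tendsto (fun d : ℝ => -d) (nhds 0) (nhds 0) := by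
      simpa using (continuous_neg.tendsto (0:ℝ))
    have h1 := hE.comp_tendsto hneg
    simp only [Function.comp_def] at h1
    have h3 : (fun d : ℝ => (-d)^3) =O[nhds 0] (fun d : ℝ => d^3) := by
      apply IsBigO.of_bound 1
      filter_upwards with d
      simp [Real.norm_eq_abs, abs_pow]
    exact (h1.trans h3).congr (fun d => by ring_nf) (fun _ => rfl)
  -- product expansion
  have hone : (fun d : ℝ => 1 + b*d^2) =O[nhds 0] (fun _ : ℝ => (1:ℝ)) := by
    apply Filter.Tendsto.isBigO_one
    have hcont : Continuous (fun d : ℝ => 1 + b*d^2) := by continuity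
    have := hcont.tendsto 0
    norm_num at this
    exact this
  have hG : (fun d : ℝ => uu d * uu (-d) - (1 + 2*b*d^2)) =O[nhds 0] (fun d => d^3) := by
    have hrepr : (fun d : ℝ => uu d * uu (-d) - (1 + 2*b*d^2))
        = (fun d : ℝ => b^2*d^4 + (((1 + b*d^2) * ((uu d - (1+b*d^2)) + (uu (-d) - (1+b*d^2))))
            + (uu d - (1+b*d^2)) * (uu (-d) - (1+b*d^2)))) := by
      funext d; ring
    rw [hrepr]
    have A1 : (fun d : ℝ => b^2*d^4) =O[nhds 0] (fun d : ℝ => d^3) :=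
      (pow_bigO (by norm_num)).const_mul_left _
    have A2 : (fun d : ℝ => (1 + b*d^2) * ((uu d - (1+b*d^2)) + (uu (-d) - (1+b*d^2))))
        =O[nhds 0] (fun d : ℝ => d^3) := by
      have := hone.mul (hE.add hEneg)
      exact this.congr (fun d => rfl) (fun d => one_mul _)
    have A3 : (fun d : ℝ => (uu d - (1+b*d^2)) * (uu (-d) - (1+b*d^2)))
        =O[nhds 0] (fun d : ℝ => d^3) := by
      refine (hE.mul hEneg).trans ?_
      exact (pow_bigO (show 3 ≤ 6 by norm_num)).congr (fun d => by ring) (fun d => rfl)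
    exact A1.add (A2.add A3)
  have hId : ∀ᶠ d : ℝ in nhds 0,
      uu d * uu (-d) * (π*d*Real.cos (π*d)) = Real.sin (π*d) := by
    filter_upwards [eventually_small] with d hd
    exact uu_refl (lt_trans hd (by norm_num))
  have hk3 : (fun d : ℝ => π*d*Real.cos (π*d) - π*d) =O[nhds 0] (fun d => d^3) := by
    have h1 := (hK_bound.trans (pow_bigO (show 3 ≤ 4 by norm_num))).add
      ((isBigO_refl (fun d : ℝ => d^3) (nhds 0)).const_mul_left (-(π^3)/2))
    exact h1.congr (fun d => by ring) (fun d => rfl)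
  have hR : (fun d : ℝ => uu d * uu (-d) * (π*d*Real.cos (π*d))
      - (π*d - π^3*d^3/2 + 2*b*π*d^3)) =O[nhds 0] (fun d => d^4) := by
    have hrepr2 : (fun d : ℝ => uu d * uu (-d) * (π*d*Real.cos (π*d))
        - (π*d - π^3*d^3/2 + 2*b*π*d^3))
        = (fun d : ℝ => (π*d*Real.cos (π*d) - (π*d - π^3*d^3/2))
          + (((2*b*d^2) * (π*d*Real.cos (π*d) - π*d))
          + (uu d * uu (-d) - (1 + 2*b*d^2)) * (π*d*Real.cos (π*d)))) := by
      funext d; ring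
    rw [hrepr2]
    have t2 : (fun d : ℝ => (2*b*d^2) * (π*d*Real.cos (π*d) - π*d)) =O[nhds 0]
        (fun d : ℝ => d^4) := by
      have := ((isBigO_refl (fun d : ℝ => d^2) (nhds 0)).const_mul_left (2*b)).mul hk3
      refine this.trans ?_
      exact (pow_bigO (show 4 ≤ 5 by norm_num)).congr (fun d => by ring) (fun d => rfl)
    have t3 : (fun d : ℝ => (uu d * uu (-d) - (1 + 2*b*d^2)) * (π*d*Real.cos (π*d)))
        =O[nhds 0] (fun d : ℝ => d^4) := by
      refine (hG.mul hk1_bound).trans ?_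
      exact (isBigO_refl (fun d : ℝ => d^3*d) (nhds 0)).congr (fun d => rfl) (fun d => by ring)
    exact hK_bound.add (t2.add t3)
  have hc3 : (fun d : ℝ => (π^3/2 - π^3/6 - 2*b*π) * d^3) =O[nhds 0] (fun d => d^4) := by
    have hev : (fun d : ℝ => (π^3/2 - π^3/6 - 2*b*π) * d^3) =ᶠ[nhds 0]
        (fun d : ℝ => (uu d * uu (-d) * (π*d*Real.cos (π*d))
          - (π*d - π^3*d^3/2 + 2*b*π*d^3))
          - (Real.sin (π*d) - (π*d - π^3*d^3/6))) := by
      filter_upwards [hId] with d hd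
      rw [hd]
      ring
    exact (hR.sub hS_bound).congr' hev.symm EventuallyEq.rfl
  have h0 : π^3/2 - π^3/6 - 2*b*π = 0 := const_cube_zero hc3
  have hπ := Real.pi_pos
  have h1 : π*(π^2 - 6*b) = 0 := by linear_combination 3*h0
  rcases mul_eq_zero.mp h1 with h2 | h2
  · exact absurd h2 hπ.ne'
  · linarith

lemma uu_expand : (fun d : ℝ => uu d - (1 + (π^2/6) * d^2)) =O[nhds 0] (fun d => d^3) := by
  obtain ⟨p, hp⟩ := uu_analytic
  have hc0 : p.coeff 0 = 1 := by
    have h := hp.coeff_zero 1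
    rw [uu_zero] at h
    exact h
  have hc1 : p.coeff 1 = 0 := by
    have h := hp.deriv
    rw [deriv_uu_zero] at h
    exact h.symm
  have hO := hp.isBigO_sub_partialSum_pow 3
  have hEb : (fun d : ℝ => uu d - (1 + p.coeff 2 * d^2)) =O[nhds 0] (fun d => d^3) := by
    have hps : ∀ y : ℝ, p.partialSum 3 y = 1 + p.coeff 2 * y^2 := by
      intro y
      simp only [FormalMultilinearSeries.partialSum, Finset.sum_range_succ,
        Finset.sum_range_zero, FormalMultilinearSeries.apply_eq_pow_smul_coeff,
        hc0, hc1, smul_eq_mul]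
      ring
    have h1 := hO.congr (f₂ := fun y : ℝ => uu y - (1 + p.coeff 2 * y^2))
      (fun y => by rw [zero_add, hps y]) (fun y => rfl)
    exact h1.trans (norm_pow_bigO 3)
  have hb := b_value hEb
  rwa [hb] at hEb

/-- As Δ = 1−α → 0+, 2Γ²(1+α)/Γ(1+2α) − 1 = Δ + Δ²(2 − π²/6) + O(Δ³), where α = 1−Δ. -/
theorem stmt0 :
    (fun Δ : ℝ =>
        2 * (Real.Gamma (1 + (1 - Δ)))^2 / Real.Gamma (1 + 2 * (1 - Δ)) - 1
          - (Δ + Δ^2 * (2 - π^2 / 6)))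
      =O[nhdsWithin 0 (Ioi 0)] (fun Δ : ℝ => Δ^3) := by
  have hneg : Filter.Tendsto (fun d : ℝ => -d) (nhds (0:ℝ)) (nhds 0) := by
    simpa using continuous_neg.tendsto (0:ℝ)
  have hEneg : (fun d : ℝ => uu (-d) - (1 + (π^2/6) * d^2)) =O[nhds 0] (fun d => d^3) := by
    have h1 := uu_expand.comp_tendsto hneg
    simp only [Function.comp_def] at h1
    have h3 : (fun d : ℝ => (-d)^3) =O[nhds 0] (fun d : ℝ => d^3) := by
      apply IsBigO.of_bound 1
      filter_upwards with d
      simp [Real.norm_eq_abs, abs_pow]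
    exact (h1.trans h3).congr (fun d => by ring_nf) (fun _ => rfl)
  have hNum : (fun d : ℝ => (1-d) - (1 + (d + d^2*(2 - π^2/6))) * ((1-2*d) * uu (-d)))
      =O[nhds 0] (fun d => d^3) := by
    have hrepr : (fun d : ℝ => (1-d) - (1 + (d + d^2*(2 - π^2/6))) * ((1-2*d) * uu (-d)))
        = (fun d : ℝ => ((4 - π^2/6)*d^3 + ((π^2/6)^2*d^4 + (2*(2-π^2/6)*(π^2/6))*d^5))
            + (-((1 + (d + d^2*(2-π^2/6))) * (1-2*d))) * (uu (-d) - (1 + (π^2/6)*d^2))) := by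
      funext d; ring
    rw [hrepr]
    have A1 : (fun d : ℝ => (4 - π^2/6)*d^3 + ((π^2/6)^2*d^4 + (2*(2-π^2/6)*(π^2/6))*d^5))
        =O[nhds 0] (fun d : ℝ => d^3) := by
      refine IsBigO.add ?_ (IsBigO.add ?_ ?_)
      · exact (pow_bigO (le_refl 3)).const_mul_left _
      · exact (pow_bigO (show 3 ≤ 4 by norm_num)).const_mul_left _
      · exact (pow_bigO (show 3 ≤ 5 by norm_num)).const_mul_left _
    have A2 : (fun d : ℝ => (-((1 + (d + d^2*(2-π^2/6))) * (1-2*d)))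
        * (uu (-d) - (1 + (π^2/6)*d^2))) =O[nhds 0] (fun d : ℝ => d^3) := by
      have hb1 : (fun d : ℝ => -((1 + (d + d^2*(2-π^2/6))) * (1-2*d))) =O[nhds 0]
          (fun _ : ℝ => (1:ℝ)) := by
        apply Filter.Tendsto.isBigO_one
        exact (Continuous.tendsto (by continuity) 0)
      have := hb1.mul hEneg
      exact this.congr (fun d => rfl) (fun d => one_mul _)
    exact A1.add A2
  have hNumL := hNum.mono (nhdsWithin_le_nhds :
    nhdsWithin (0:ℝ) (Ioi 0) ≤ nhds 0)
  have h1u : Filter.Tendsto (fun d : ℝ => uu (-d)) (nhds 0) (nhds 1) := by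
    have := (uu_analytic.continuousAt.tendsto).comp hneg
    rwa [uu_zero] at this
  have hInvTends : Filter.Tendsto (fun d : ℝ => ((1-2*d) * uu (-d))⁻¹) (nhds 0) (nhds 1) := by
    have h2 : Filter.Tendsto (fun d : ℝ => (1-2*d)) (nhds (0:ℝ)) (nhds 1) := by
      have hcont : Continuous fun d : ℝ => 1-2*d := by continuity
      have := hcont.tendsto 0
      norm_num at this
      exact this
    have h3 := h2.mul h1u
    rw [mul_one] at h3
    have h4 := h3.inv₀ one_ne_zero
    rwa [inv_one] at h4
  have hInv : (fun d : ℝ => ((1-2*d) * uu (-d))⁻¹) =O[nhdsWithin (0:ℝ) (Ioi 0)]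
      (fun _ : ℝ => (1:ℝ)) := (hInvTends.mono_left nhdsWithin_le_nhds).isBigO_one ℝ
  have hev : (fun Δ : ℝ =>
        2 * (Real.Gamma (1 + (1 - Δ)))^2 / Real.Gamma (1 + 2 * (1 - Δ)) - 1
          - (Δ + Δ^2 * (2 - π^2 / 6)))
      =ᶠ[nhdsWithin (0:ℝ) (Ioi 0)]
      (fun d : ℝ => ((1-d) - (1 + (d + d^2*(2 - π^2/6))) * ((1-2*d) * uu (-d)))
        * ((1-2*d) * uu (-d))⁻¹) := by
    have hmem : Ioo (0:ℝ) (1/4) ∈ nhdsWithin (0:ℝ) (Ioi 0) :=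
      Ioo_mem_nhdsGT_of_mem (by norm_num : (0:ℝ) ∈ Ico (0:ℝ) (1/4))
    filter_upwards [hmem] with d hd
    obtain ⟨hd0, hd4⟩ := hd
    have h1d : (0:ℝ) < 1 - d := by linarith
    have h12 : (0:ℝ) < 1 - 2*d := by linarith
    have h22 : (0:ℝ) < 2 - 2*d := by linarith
    have hg1 : 0 < Real.Gamma (1-d) := Real.Gamma_pos_of_pos h1d
    have hg2 : 0 < Real.Gamma (1-2*d) := Real.Gamma_pos_of_pos h12
    have huneg : uu (-d) = Real.Gamma (1-2*d) / (Real.Gamma (1-d))^2 := by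
      unfold uu
      rw [show (1:ℝ)+2*(-d) = 1-2*d by ring, show (1:ℝ)+(-d) = 1-d by ring]
    have e1 : Real.Gamma (1+(1-d)) = (1-d) * Real.Gamma (1-d) := by
      rw [show (1:ℝ)+(1-d) = (1-d)+1 by ring, Real.Gamma_add_one h1d.ne']
    have e2 : Real.Gamma (1+2*(1-d)) = (2-2*d)*((1-2*d) * Real.Gamma (1-2*d)) := by
      rw [show (1:ℝ)+2*(1-d) = (2-2*d)+1 by ring, Real.Gamma_add_one h22.ne',
        show (2:ℝ)-2*d = (1-2*d)+1 by ring, Real.Gamma_add_one h12.ne']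
    rw [e1, e2, huneg]
    field_simp
    ring
  have hfin := (hNumL.mul hInv).congr' hev.symm (EventuallyEq.rfl)
  exact hfin.congr (fun _ => rfl) (fun d => mul_one _)
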